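/- Any two countable atomless Boolean algebras are isomorphic. -/

import Mathlib

open Set

/-- `X = [0,1) ∩ ℚ`, represented as a set of rationals. -/
def Xset : Set ℚ := {x | 0 ≤ x ∧ x < 1}

/-- `X ∪ {1}`, the possible endpoints. -/
def Eset : Set ℚ := Xset ∪ {1}

/-- `f` (restricted to `{0,…,2n-1}`) is an increasing sequence of endpoints
representing `a` as a union of half-open intervals `[f(2i), f(2i+1))`. -/
def IsGoodSeq (n : ℕ) (f : ℕ → ℚ) (a : Set ℚ) : Prop :=
  (∀ i < 2 * n, f i ∈ Eset) ∧
  (∀ i j : ℕ, i < j → j < 2 * n → f i < f j) ∧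
  (∀ x ∈ Xset, (x ∈ a ↔ ∃ i < n, f (2 * i) ≤ x ∧ x < f (2 * i + 1)))

/-- A subset of `X` is good if it is a finite union of half-open intervals. -/
def IsGood (a : Set ℚ) : Prop := a ⊆ Xset ∧ ∃ n f, IsGoodSeq n f a

/-- The set of endpoints of a good set (the image of its endpoint sequence). -/
def endpoints (a : Set ℚ) : Set ℚ :=
  {u | ∃ n f, IsGoodSeq n f a ∧ ∃ i < 2 * n, f i = u}

/-- A function `e` is finite-to-one on `X ∪ {1}`. -/
def FinToOne (e : ℚ → ℕ) : Prop := ∀ m : ℕ, {x ∈ Eset | e x = m}.Finite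

/-- `int(a) = {e(u) : u ∈ Im(seq_a)}`, the interesting numbers of `a`. -/
def intS (e : ℚ → ℕ) (a : Set ℚ) : Set ℕ := e '' endpoints a

/-- `a` and `b` oscillate at `i`: for some side `k`, `i` belongs to `int` of that
side only, and the largest `j < i` lying in the symmetric difference
`int(a) ∆ int(b)` (if any) belongs to the other side only. -/
def OscAt (e : ℚ → ℕ) (a b : Set ℚ) (i : ℕ) : Prop :=
  ∃ k : Bool,
    (i ∈ intS e (bif k then b else a) ∧ i ∉ intS e (bif k then a else b)) ∧
    ∀ j, j < i → j ∈ symmDiff (intS e a) (intS e b) →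
      (∀ j', j < j' → j' < i → j' ∉ symmDiff (intS e a) (intS e b)) →
      (j ∈ intS e (bif k then a else b) ∧ j ∉ intS e (bif k then b else a))

/-- The oscillation of `a` and `b`: the number of `i` at which they oscillate. -/
noncomputable def osc (e : ℚ → ℕ) (a b : Set ℚ) : ℕ := {i | OscAt e a b i}.ncard

/-- `C` is a Boolean subalgebra of the interval algebra of good subsets of `X`. -/
def IsSubalg (C : Set (Set ℚ)) : Prop :=
  (∀ a ∈ C, IsGood a) ∧ ∅ ∈ C ∧ Xset ∈ C ∧
  (∀ a ∈ C, ∀ b ∈ C, a ∪ b ∈ C) ∧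
  (∀ a ∈ C, ∀ b ∈ C, a ∩ b ∈ C) ∧
  (∀ a ∈ C, Xset \ a ∈ C)

/-- `C` is atomless: every nonempty member properly contains a nonempty member. -/
def IsAtomlessAlg (C : Set (Set ℚ)) : Prop :=
  ∀ a ∈ C, a ≠ ∅ → ∃ b ∈ C, b ≠ ∅ ∧ b ⊂ a


section BackForth
variable {α : Type*} {β : Type*} [BooleanAlgebra α] [BooleanAlgebra β]

/-- The "cell" of a finite sequence of elements determined by a sign vector. -/
def mycell (n : ℕ) (l : ℕ → α) (ε : ℕ → Bool) : α :=
  (Finset.range n).inf fun i => bif ε i then l i else (l i)ᶜ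

theorem mycell_congr {n : ℕ} {l l' : ℕ → α} {ε ε' : ℕ → Bool}
    (hl : ∀ i < n, l i = l' i) (hε : ∀ i < n, ε i = ε' i) :
    mycell n l ε = mycell n l' ε' :=
  Finset.inf_congr rfl fun i hi => by
    rw [hl i (Finset.mem_range.1 hi), hε i (Finset.mem_range.1 hi)]

theorem mycell_succ (n : ℕ) (l : ℕ → α) (ε : ℕ → Bool) :
    mycell (n+1) l ε = (bif ε n then l n else (l n)ᶜ) ⊓ mycell n l ε := by
  rw [mycell, Finset.range_add_one, Finset.inf_insert]; rfl

theorem mycell_le {n i : ℕ} (hi : i < n) (l : ℕ → α) (ε : ℕ → Bool) :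
    mycell n l ε ≤ (bif ε i then l i else (l i)ᶜ) :=
  Finset.inf_le (Finset.mem_range.2 hi)

theorem mycell_le_of_true {n i : ℕ} (hi : i < n) {l : ℕ → α} {ε : ℕ → Bool}
    (h : ε i = true) : mycell n l ε ≤ l i := by
  have := mycell_le hi l ε; rwa [h] at this

theorem mycell_le_of_false {n i : ℕ} (hi : i < n) {l : ℕ → α} {ε : ℕ → Bool}
    (h : ε i = false) : mycell n l ε ≤ (l i)ᶜ := by
  have := mycell_le hi l ε; rwa [h] at this

theorem eq_bot_of_inf_mycell (n : ℕ) (l : ℕ → α) :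
    ∀ y : α, (∀ ε : ℕ → Bool, y ⊓ mycell n l ε = ⊥) → y = ⊥ := by
  induction n with
  | zero =>
    intro y h
    have := h (fun _ => false)
    simpa [mycell] using this
  | succ n ih =>
    intro y h
    have key : ∀ z : Bool, y ⊓ (bif z then l n else (l n)ᶜ) = ⊥ := by
      intro z
      apply ih
      intro ε
      have h1 := h (Function.update ε n z)
      rw [mycell_succ, Function.update_self] at h1
      have hc : mycell n l (Function.update ε n z) = mycell n l ε :=
        mycell_congr (fun _ _ => rfl)
          (fun i hi => Function.update_of_ne (by omega) _ _)
      rw [hc] at h1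
      calc y ⊓ (bif z then l n else (l n)ᶜ) ⊓ mycell n l ε
          = y ⊓ ((bif z then l n else (l n)ᶜ) ⊓ mycell n l ε) := by rw [inf_assoc]
        _ = ⊥ := h1
    have h1 := key true
    have h2 := key false
    simp only [Bool.cond_true, Bool.cond_false] at h1 h2
    have : y ⊓ (l n ⊔ (l n)ᶜ) = ⊥ := by
      rw [inf_sup_left, h1, h2, bot_sup_eq]
    simpa using this

theorem myle_iff {n i j : ℕ} (hi : i < n) (hj : j < n) (l : ℕ → α) :
    l i ≤ l j ↔ ∀ ε : ℕ → Bool, ε i = true → ε j = false → mycell n l ε = ⊥ := by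
  constructor
  · intro hle ε h1 h2
    have c1 : mycell n l ε ≤ l i := mycell_le_of_true hi h1
    have c2 : mycell n l ε ≤ (l j)ᶜ := mycell_le_of_false hj h2
    have : mycell n l ε ≤ l j ⊓ (l j)ᶜ := le_inf (c1.trans hle) c2
    simpa using this
  · intro h
    have hbot : l i ⊓ (l j)ᶜ = ⊥ := by
      apply eq_bot_of_inf_mycell n l
      intro ε
      rcases Bool.eq_false_or_eq_true (ε i) with hεi | hεi
      swap
      · have := mycell_le_of_false (l := l) hi hεi
        have : l i ⊓ (l j)ᶜ ⊓ mycell n l ε ≤ l i ⊓ (l i)ᶜ :=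
          le_inf (inf_le_left.trans inf_le_left) (inf_le_right.trans this)
        simpa using le_bot_iff.1 (by simpa using this)
      · rcases Bool.eq_false_or_eq_true (ε j) with hεj | hεj
        swap
        · rw [h ε hεi hεj, inf_bot_eq]
        · have := mycell_le_of_true (l := l) hj hεj
          have : l i ⊓ (l j)ᶜ ⊓ mycell n l ε ≤ (l j)ᶜ ⊓ l j :=
            le_inf (inf_le_left.trans inf_le_right) (inf_le_right.trans this)
          simpa using le_bot_iff.1 (by simpa using this)
    rwa [← _root_.sdiff_eq, sdiff_eq_bot_iff] at hbot

/-- Two tuples are quantifier-free equivalent if corresponding cells vanish together. -/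
def MyEquiv (n : ℕ) (l : ℕ → α) (m : ℕ → β) : Prop :=
  ∀ ε : ℕ → Bool, (mycell n l ε = ⊥ ↔ mycell n m ε = ⊥)

theorem MyEquiv.symm {n : ℕ} {l : ℕ → α} {m : ℕ → β} (h : MyEquiv n l m) :
    MyEquiv n m l := fun ε => (h ε).symm

theorem MyEquiv.le_iff {n i j : ℕ} (hi : i < n) (hj : j < n) {l : ℕ → α} {m : ℕ → β}
    (h : MyEquiv n l m) : l i ≤ l j ↔ m i ≤ m j := by
  rw [myle_iff hi hj, myle_iff hi hj]
  exact forall_congr' fun ε => by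
    constructor
    · intro h1 e1 e2; exact (h ε).1 (h1 e1 e2)
    · intro h1 e1 e2; exact (h ε).2 (h1 e1 e2)


/-- Extend a sign vector on `Fin n` to `ℕ`. -/
def extBool (n : ℕ) (ε : Fin n → Bool) : ℕ → Bool :=
  fun i => if h : i < n then ε ⟨i, h⟩ else false

theorem exists_extend (hβ : ∀ d : β, ⊥ < d → ∃ b, ⊥ < b ∧ b < d)
    {n : ℕ} {l : ℕ → α} {m : ℕ → β} (h : MyEquiv n l m) (a : α) :
    ∃ b : β, MyEquiv (n+1) (Function.update l n a) (Function.update m n b) := by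
  classical
  set c : (Fin n → Bool) → α := fun ε => mycell n l (extBool n ε) with hcdef
  set d : (Fin n → Bool) → β := fun ε => mycell n m (extBool n ε) with hddef
  have hcd : ∀ ε, (c ε = ⊥ ↔ d ε = ⊥) := fun ε => h (extBool n ε)
  have hchoice : ∀ ε : Fin n → Bool, ∃ y : β, y ≤ d ε ∧
      ((y = ⊥) ↔ c ε ⊓ a = ⊥) ∧ ((d ε ⊓ yᶜ = ⊥) ↔ c ε ⊓ aᶜ = ⊥) := by
    intro ε
    by_cases h1 : c ε ⊓ a = ⊥
    · refine ⟨⊥, bot_le, by simp [h1], ?_⟩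
      have hca : c ε ⊓ aᶜ = c ε := by
        have : c ε ⊓ (a ⊔ aᶜ) = c ε := by simp
        rw [inf_sup_left, h1, bot_sup_eq] at this
        exact this
      rw [hca]
      simp [hcd ε]
    · by_cases h2 : c ε ⊓ aᶜ = ⊥
      · have hca : c ε ⊓ a = c ε := by
          have : c ε ⊓ (a ⊔ aᶜ) = c ε := by simp
          rw [inf_sup_left, h2, sup_bot_eq] at this
          exact this
        refine ⟨d ε, le_rfl, ?_, by simp [h2]⟩
        rw [hca]
        exact (hcd ε).symm
      · have hcne : c ε ≠ ⊥ := fun hc => h1 (by rw [hc, bot_inf_eq])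
        have hdne : d ε ≠ ⊥ := fun hd => hcne ((hcd ε).2 hd)
        obtain ⟨y, hy1, hy2⟩ := hβ (d ε) (bot_lt_iff_ne_bot.2 hdne)
        refine ⟨y, hy2.le, ?_, ?_⟩
        · simp only [h1, iff_false]
          exact bot_lt_iff_ne_bot.1 hy1
        · simp only [h2, iff_false]
          intro hdy
          have : d ε ≤ y := by
            have hdd : d ε ⊓ (y ⊔ yᶜ) = d ε := by simp
            rw [inf_sup_left, hdy, sup_bot_eq] at hdd
            rw [← hdd]; exact inf_le_right
          exact absurd (lt_of_lt_of_le hy2 this) (lt_irrefl _)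
  choose F hF1 hF2 hF3 using hchoice
  have hdisj : ∀ ε ε' : Fin n → Bool, ε ≠ ε' → d ε ⊓ d ε' = ⊥ := by
    intro ε ε' hne
    have : ∃ i : Fin n, ε i ≠ ε' i := by
      by_contra hc
      push_neg at hc
      exact hne (funext hc)
    obtain ⟨i, hi⟩ := this
    have hext : ∀ (δ : Fin n → Bool), extBool n δ i.1 = δ i := by
      intro δ; simp [extBool, i.2]
    cases hb : ε i <;> cases hb' : ε' i
    · exact absurd (hb.trans hb'.symm) hi
    · have c1 : d ε ≤ (m i.1)ᶜ := mycell_le_of_false (l := m) i.2 ((hext ε).trans hb)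
      have c2 : d ε' ≤ m i.1 := mycell_le_of_true (l := m) i.2 ((hext ε').trans hb')
      have : d ε ⊓ d ε' ≤ (m i.1)ᶜ ⊓ m i.1 := inf_le_inf c1 c2
      simpa using le_bot_iff.1 (by simpa using this)
    · have c1 : d ε ≤ m i.1 := mycell_le_of_true (l := m) i.2 ((hext ε).trans hb)
      have c2 : d ε' ≤ (m i.1)ᶜ := mycell_le_of_false (l := m) i.2 ((hext ε').trans hb')
      have : d ε ⊓ d ε' ≤ m i.1 ⊓ (m i.1)ᶜ := inf_le_inf c1 c2
      simpa using le_bot_iff.1 (by simpa using this)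
    · exact absurd (hb.trans hb'.symm) hi
  set b : β := Finset.univ.sup F with hbdef
  have hb : ∀ ε, d ε ⊓ b = F ε := by
    intro ε
    rw [hbdef, Finset.sup_inf_distrib_left]
    apply le_antisymm
    · apply Finset.sup_le
      intro ε' _
      by_cases hee : ε' = ε
      · subst hee; exact inf_le_right
      · have : d ε ⊓ F ε' ≤ d ε ⊓ d ε' := inf_le_inf le_rfl (hF1 ε')
        rw [hdisj ε ε' (fun hc => hee hc.symm)] at this
        exact this.trans bot_le
    · have h1 : F ε ≤ d ε ⊓ F ε := le_inf (hF1 ε) le_rfl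
      exact h1.trans (Finset.le_sup (f := fun ε' => d ε ⊓ F ε') (Finset.mem_univ ε))
  have hb' : ∀ ε, d ε ⊓ bᶜ = d ε ⊓ (F ε)ᶜ := by
    intro ε
    have key : d ε ⊓ (d ε ⊓ b)ᶜ = d ε ⊓ bᶜ := by
      rw [compl_inf, inf_sup_left, inf_compl_eq_bot, bot_sup_eq]
    rw [← key, hb]
  refine ⟨b, ?_⟩
  intro ε
  set ε₀ : Fin n → Bool := fun i => ε i.1 with hε₀
  have hεε : ∀ i < n, ε i = extBool n ε₀ i := by
    intro i hi; simp [extBool, hi, hε₀]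
  have hcl : mycell (n+1) (Function.update l n a) ε = (bif ε n then a else aᶜ) ⊓ c ε₀ := by
    rw [mycell_succ, Function.update_self]
    congr 1
    exact mycell_congr (fun i hi => Function.update_of_ne (by omega) _ _) hεε
  have hcm : mycell (n+1) (Function.update m n b) ε = (bif ε n then b else bᶜ) ⊓ d ε₀ := by
    rw [mycell_succ, Function.update_self]
    congr 1
    exact mycell_congr (fun i hi => Function.update_of_ne (by omega) _ _) hεε
  rw [hcl, hcm]
  cases hb0 : ε n
  · simp only [Bool.cond_false]
    rw [inf_comm (aᶜ) (c ε₀), inf_comm (bᶜ) (d ε₀), hb' ε₀]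
    exact (hF3 ε₀).symm
  · simp only [Bool.cond_true]
    rw [inf_comm a (c ε₀), inf_comm b (d ε₀), hb ε₀]
    exact (hF2 ε₀).symm


variable (hα : ∀ d : α, ⊥ < d → ∃ b, ⊥ < b ∧ b < d)
  (hβ : ∀ d : β, ⊥ < d → ∃ b, ⊥ < b ∧ b < d) (u : ℕ → α) (v : ℕ → β)

/-- One step of the back-and-forth construction. -/
noncomputable def nextPair (n : ℕ) (p : {p : (ℕ → α) × (ℕ → β) // MyEquiv n p.1 p.2}) :
    {p : (ℕ → α) × (ℕ → β) // MyEquiv (n+1) p.1 p.2} :=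
  if hn : n % 2 = 0 then
    ⟨(Function.update p.1.1 n (u (n/2)),
      Function.update p.1.2 n (Classical.choose (exists_extend hβ p.2 (u (n/2))))),
      Classical.choose_spec (exists_extend hβ p.2 (u (n/2)))⟩
  else
    ⟨(Function.update p.1.1 n (Classical.choose (exists_extend hα p.2.symm (v (n/2)))),
      Function.update p.1.2 n (v (n/2))),
      (Classical.choose_spec (exists_extend hα p.2.symm (v (n/2)))).symm⟩

theorem nextPair_fst_apply (n : ℕ) (p : {p : (ℕ → α) × (ℕ → β) // MyEquiv n p.1 p.2})
    {i : ℕ} (hi : i ≠ n) : (nextPair hα hβ u v n p).1.1 i = p.1.1 i := by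
  unfold nextPair
  split <;> simp [Function.update_of_ne hi]

theorem nextPair_snd_apply (n : ℕ) (p : {p : (ℕ → α) × (ℕ → β) // MyEquiv n p.1 p.2})
    {i : ℕ} (hi : i ≠ n) : (nextPair hα hβ u v n p).1.2 i = p.1.2 i := by
  unfold nextPair
  split <;> simp [Function.update_of_ne hi]

theorem nextPair_fst_even (n : ℕ) (p : {p : (ℕ → α) × (ℕ → β) // MyEquiv n p.1 p.2})
    (hn : n % 2 = 0) : (nextPair hα hβ u v n p).1.1 n = u (n/2) := by
  unfold nextPair
  rw [dif_pos hn]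
  simp

theorem nextPair_snd_odd (n : ℕ) (p : {p : (ℕ → α) × (ℕ → β) // MyEquiv n p.1 p.2})
    (hn : ¬ n % 2 = 0) : (nextPair hα hβ u v n p).1.2 n = v (n/2) := by
  unfold nextPair
  rw [dif_neg hn]
  simp

variable [Nontrivial α] [Nontrivial β]

/-- The back-and-forth sequence of partial tuples. -/
noncomputable def BF : ∀ n : ℕ, {p : (ℕ → α) × (ℕ → β) // MyEquiv n p.1 p.2}
  | 0 => ⟨(fun _ => ⊥, fun _ => ⊥), fun ε => by
      simp only [mycell, Finset.range_zero, Finset.inf_empty]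
      exact iff_of_false (by simp) (by simp)⟩
  | n+1 => nextPair hα hβ u v n (BF n)

theorem BF_succ (n : ℕ) : BF hα hβ u v (n+1) = nextPair hα hβ u v n (BF hα hβ u v n) := rfl

/-- The limit tuples. -/
noncomputable def Lf (i : ℕ) : α := (BF hα hβ u v (i+1)).1.1 i
noncomputable def Mf (i : ℕ) : β := (BF hα hβ u v (i+1)).1.2 i

theorem BF_agree_left (n i : ℕ) (hi : i < n) :
    (BF hα hβ u v n).1.1 i = Lf hα hβ u v i := by
  induction n with
  | zero => exact absurd hi (Nat.not_lt_zero i)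
  | succ n ih =>
    rcases Nat.lt_succ_iff_lt_or_eq.1 hi with h | h
    · rw [BF_succ, nextPair_fst_apply hα hβ u v n _ (Nat.ne_of_lt h), ih h]
    · subst h; rfl

theorem BF_agree_right (n i : ℕ) (hi : i < n) :
    (BF hα hβ u v n).1.2 i = Mf hα hβ u v i := by
  induction n with
  | zero => exact absurd hi (Nat.not_lt_zero i)
  | succ n ih =>
    rcases Nat.lt_succ_iff_lt_or_eq.1 hi with h | h
    · rw [BF_succ, nextPair_snd_apply hα hβ u v n _ (Nat.ne_of_lt h), ih h]
    · subst h; rfl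

theorem equiv_lim (n : ℕ) : MyEquiv n (Lf hα hβ u v) (Mf hα hβ u v) := by
  intro ε
  have h1 : mycell n (Lf hα hβ u v) ε = mycell n (BF hα hβ u v n).1.1 ε :=
    mycell_congr (fun i hi => (BF_agree_left hα hβ u v n i hi).symm) (fun _ _ => rfl)
  have h2 : mycell n (Mf hα hβ u v) ε = mycell n (BF hα hβ u v n).1.2 ε :=
    mycell_congr (fun i hi => (BF_agree_right hα hβ u v n i hi).symm) (fun _ _ => rfl)
  rw [h1, h2]
  exact (BF hα hβ u v n).2 ε

theorem Lf_even (t : ℕ) : Lf hα hβ u v (2*t) = u t := by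
  show (BF hα hβ u v (2*t+1)).1.1 (2*t) = u t
  rw [BF_succ, nextPair_fst_even hα hβ u v (2*t) _ (by omega)]
  congr 1
  omega

theorem Mf_odd (t : ℕ) : Mf hα hβ u v (2*t+1) = v t := by
  show (BF hα hβ u v (2*t+1+1)).1.2 (2*t+1) = v t
  rw [BF_succ, nextPair_snd_odd hα hβ u v (2*t+1) _ (by omega)]
  congr 1
  omega

end BackForth


/-- any two countable atomless Boolean algebras are isomorphic. -/
theorem countable_atomless_BA_iso (α β : Type*)
    [BooleanAlgebra α] [BooleanAlgebra β]
    [Countable α] [Countable β] [Infinite α] [Infinite β]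
    (hα : ∀ a : α, ⊥ < a → ∃ b : α, ⊥ < b ∧ b < a)
    (hβ : ∀ a : β, ⊥ < a → ∃ b : β, ⊥ < b ∧ b < a) :
    Nonempty (α ≃o β) := by
  obtain ⟨u, hu⟩ := exists_surjective_nat α
  obtain ⟨v, hv⟩ := exists_surjective_nat β
  set L : ℕ → α := Lf hα hβ u v with hL
  set M : ℕ → β := Mf hα hβ u v with hM
  have key : ∀ i j : ℕ, (L i ≤ L j ↔ M i ≤ M j) := by
    intro i j
    exact (equiv_lim hα hβ u v (max i j + 1)).le_iff
      (Nat.lt_succ_of_le (le_max_left i j)) (Nat.lt_succ_of_le (le_max_right i j))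
  have hLs : ∀ a : α, ∃ i, L i = a := by
    intro a
    obtain ⟨t, ht⟩ := hu a
    exact ⟨2*t, by rw [hL, Lf_even]; exact ht⟩
  choose idx hidx using hLs
  set g : α → β := fun a => M (idx a) with hg
  have hmono : ∀ a a' : α, (g a ≤ g a' ↔ a ≤ a') := by
    intro a a'
    rw [hg]
    dsimp only
    rw [← key, hidx, hidx]
  have hsurj : Function.Surjective g := by
    intro b0
    obtain ⟨t, ht⟩ := hv b0
    refine ⟨L (2*t+1), ?_⟩
    have h1 : L (idx (L (2*t+1))) = L (2*t+1) := hidx _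
    have h2 : M (idx (L (2*t+1))) = M (2*t+1) :=
      le_antisymm ((key _ _).1 h1.le) ((key _ _).1 h1.ge)
    show M (idx (L (2*t+1))) = b0
    rw [h2, hM, Mf_odd]
    exact ht
  have hinj : Function.Injective g := fun a a' hgg =>
    le_antisymm ((hmono _ _).1 hgg.le) ((hmono _ _).1 hgg.ge)
  exact ⟨{ toEquiv := Equiv.ofBijective g ⟨hinj, hsurj⟩,
           map_rel_iff' := fun {a a'} => hmono a a' }⟩
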